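/- For integers n ≥ 0 and s with 2s ≥ n+2, the number of lattice paths from (0,0) to (n+2-2s, n+2) with n+2 steps of type (x,y)→(x±1,y+1), first and last step going right, exactly s left steps, and which cross the line x=0, equals binomial(n, s). -/
import Mathlib


open Finset
open scoped Classical
noncomputable section

/-- Position (x-coordinate) after `t` steps of the path `p`, where `true` encodes a
right step `(x,y) ↦ (x+1,y+1)` and `false` a left step `(x,y) ↦ (x-1,y+1)`. -/
def pathPos {m : ℕ} (p : Fin m → Bool) (t : ℕ) : ℤ :=
  ∑ j : Fin m, if (j : ℕ) < t then (if p j then (1 : ℤ) else -1) else 0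

lemma pathPos_zero {m : ℕ} (p : Fin m → Bool) : pathPos p 0 = 0 := by
  simp [pathPos]

lemma pathPos_succ {m : ℕ} (p : Fin m → Bool) (t : ℕ) (ht : t < m) :
    pathPos p (t + 1) = pathPos p t + (if p ⟨t, ht⟩ then 1 else -1) := by
  unfold pathPos
  have key : ∀ j : Fin m, (if (j:ℕ) < t+1 then (if p j then (1:ℤ) else -1) else 0)
      = (if (j:ℕ) < t then (if p j then (1:ℤ) else -1) else 0)
        + (if j = ⟨t,ht⟩ then (if p j then (1:ℤ) else -1) else 0) := by
    intro j
    rcases lt_trichotomy (j:ℕ) t with h|h|h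
    · have : (j:ℕ) ≠ t := h.ne
      simp [h, Nat.lt_succ_of_lt h, Fin.ext_iff, this]
    · have h1 : ¬ (j:ℕ) < t := by omega
      simp [h, h1, Fin.ext_iff]
    · have h1 : ¬ (j:ℕ) < t + 1 := by omega
      have h2 : ¬ (j:ℕ) < t := by omega
      have h3 : (j:ℕ) ≠ t := by omega
      simp [h1, h2, Fin.ext_iff, h3]
  rw [Finset.sum_congr rfl (fun j _ => key j), Finset.sum_add_distrib,
      Finset.sum_ite_eq' Finset.univ]
  simp

lemma pathPos_succ_of_ge {m : ℕ} (p : Fin m → Bool) (t : ℕ) (ht : m ≤ t) :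
    pathPos p (t + 1) = pathPos p t := by
  unfold pathPos
  refine Finset.sum_congr rfl (fun j _ => ?_)
  have h1 : (j:ℕ) < t := lt_of_lt_of_le j.isLt ht
  simp [h1, Nat.lt_succ_of_lt h1]

lemma pathPos_succ_ge {m : ℕ} (p : Fin m → Bool) (t : ℕ) :
    pathPos p t - 1 ≤ pathPos p (t + 1) := by
  by_cases ht : t < m
  · rw [pathPos_succ p t ht]
    split <;> omega
  · rw [pathPos_succ_of_ge p t (le_of_not_gt ht)]; omega

lemma hits_neg_one {m : ℕ} (p : Fin m → Bool) :
    ∀ N, pathPos p N ≤ -1 → ∃ t ≤ N, pathPos p t = -1 := by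
  intro N
  induction N with
  | zero => intro h; rw [pathPos_zero] at h; omega
  | succ N ih =>
    intro h
    by_cases hN : pathPos p (N+1) = -1
    · exact ⟨N+1, le_refl _, hN⟩
    · have h2 : pathPos p N ≤ -1 := by
        have := pathPos_succ_ge p N; omega
      obtain ⟨t, ht, he⟩ := ih h2
      exact ⟨t, Nat.le_succ_of_le ht, he⟩

lemma pathPos_total {m : ℕ} (p : Fin m → Bool) :
    pathPos p m = 2 * ((Finset.univ.filter (fun j => p j = true)).card : ℤ) - m := by
  unfold pathPos
  have key : ∀ j : Fin m, (if (j:ℕ) < m then (if p j then (1:ℤ) else -1) else 0)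
      = 2 * (if p j = true then (1:ℤ) else 0) - 1 := by
    intro j
    simp only [j.isLt, if_true]
    cases hp : p j <;> simp
  rw [Finset.sum_congr rfl (fun j _ => key j), Finset.sum_sub_distrib,
      ← Finset.mul_sum, Finset.sum_boole]
  simp [mul_comm]

/-- Generally admissible paths of size `(n,s)`: `n+2` diagonal steps starting at `(0,0)`,
the 0-th and the last step going right, with exactly `s` left steps
(hence ending at `(n+2-2s, n+2)`). -/
def admissible (n s : ℕ) : Finset (Fin (n + 2) → Bool) :=
  Finset.univ.filter (fun p =>
    (∀ j : Fin (n + 2), (j : ℕ) = 0 → p j = true) ∧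
    (∀ j : Fin (n + 2), (j : ℕ) = n + 1 → p j = true) ∧
    (Finset.univ.filter (fun j => p j = false)).card = s)

/-- The path crosses the line `x = 0`, i.e. reaches x-coordinate `-1` at some time. -/
def crossesLeft {m : ℕ} (p : Fin m → Bool) : Prop :=
  ∃ t ∈ Finset.range (m + 1), pathPos p t = -1

/-- A path of size `(n,s)` crosses the line `x = n+2-2s`,
i.e. reaches x-coordinate `n+3-2s` at some time. -/
def crossesRight (n s : ℕ) (p : Fin (n + 2) → Bool) : Prop :=
  ∃ t ∈ Finset.range (n + 3), pathPos p t = (n : ℤ) + 3 - 2 * s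

/-- `L n s`: the number of generally admissible paths of size `(n,s)`
crossing the line `x = 0`. -/
def L (n s : ℕ) : ℕ := ((admissible n s).filter (fun p => crossesLeft p)).card

/-- Constrained lattice paths: `n+2` diagonal steps from `(0,0)` to `(n+2-2s, n+2)`,
staying inside the strip `0 ≤ x ≤ n+2-2s`.  (`n` is allowed to be a negative integer,
with the convention that there are `max (n+2) 0` steps.) -/
def aPaths (n : ℤ) (s : ℕ) : Finset (Fin (n + 2).toNat → Bool) :=
  Finset.univ.filter (fun p =>
    pathPos p (n + 2).toNat = n + 2 - 2 * s ∧
    ∀ t ∈ Finset.range ((n + 2).toNat + 1),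
      0 ≤ pathPos p t ∧ pathPos p t ≤ n + 2 - 2 * s)

/-- `a n s`: the number of lattice paths from `(0,0)` to `(n+2-2s, n+2)` with steps
`(x,y) ↦ (x±1, y+1)` staying inside the strip `0 ≤ x ≤ n+2-2s`. -/
def a (n : ℤ) (s : ℕ) : ℕ := (aPaths n s).card

/-- Binomial coefficient `C(n,k)` with integer lower index, zero when `k < 0`. -/
def binom (n : ℕ) (k : ℤ) : ℕ := if k < 0 then 0 else n.choose k.toNat

/-- `b W H`: the number of lattice paths from `(0,0)` to `(W,H)` with steps
`(x,y) ↦ (x±1,y+1)` staying in the strip `0 ≤ x ≤ W`, whose first and last steps go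
right, and whose intermediate steps come in consecutive same-direction pairs
`(1,2), (3,4), …, (H-3,H-2)`. -/
def bPaths (W H : ℕ) : Finset (Fin H → Bool) :=
  Finset.univ.filter (fun p =>
    (∀ j : Fin H, (j : ℕ) = 0 → p j = true) ∧
    (∀ j : Fin H, (j : ℕ) = H - 1 → p j = true) ∧
    (∀ j1 j2 : Fin H, (j1 : ℕ) % 2 = 1 → (j2 : ℕ) = (j1 : ℕ) + 1 →
      (j1 : ℕ) + 1 ≤ H - 2 → p j1 = p j2) ∧
    pathPos p H = (W : ℤ) ∧
    ∀ t ∈ Finset.range (H + 1), 0 ≤ pathPos p t ∧ pathPos p t ≤ (W : ℤ))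

def b (W H : ℕ) : ℕ := (bPaths W H).card

/-- for `2s ≥ n+2`, the number of generally admissible paths of size
`(n,s)` crossing the line `x = 0` equals `C(n, s)`. -/
lemma admissible_card (n s : ℕ) : (admissible n s).card = n.choose s := by
  classical
  set I : Finset (Fin (n+2)) :=
    Finset.univ.filter (fun j => (j:ℕ) ≠ 0 ∧ (j:ℕ) ≠ n+1) with hI
  have hIcard : I.card = n := by
    have h1 := Finset.card_filter_add_card_filter_not
      (s := (Finset.univ : Finset (Fin (n+2))))
      (p := fun j => (j:ℕ) ≠ 0 ∧ (j:ℕ) ≠ n+1)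
    have h2 : (Finset.univ.filter (fun j : Fin (n+2) => ¬((j:ℕ) ≠ 0 ∧ (j:ℕ) ≠ n+1)))
        = {(⟨0, by omega⟩ : Fin (n+2)), ⟨n+1, by omega⟩} := by
      ext j
      simp only [Finset.mem_filter, Finset.mem_univ, true_and, Finset.mem_insert,
        Finset.mem_singleton, Fin.ext_iff]
      omega
    have h3 : ({(⟨0, by omega⟩ : Fin (n+2)), ⟨n+1, by omega⟩} : Finset (Fin (n+2))).card = 2 := by
      rw [Finset.card_pair]
      simp [Fin.ext_iff]
    rw [h2, h3] at h1
    simp only [Finset.card_univ, Fintype.card_fin] at h1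
    rw [hI]
    omega
  have hbij : (admissible n s).card = (I.powersetCard s).card := by
    refine Finset.card_bij' (fun p _ => Finset.univ.filter (fun j => p j = false))
      (fun S _ => fun j => decide (j ∉ S)) ?_ ?_ ?_ ?_
    · intro p hp
      simp only [admissible, Finset.mem_filter, Finset.mem_univ, true_and] at hp
      obtain ⟨h0, h1, hc⟩ := hp
      rw [Finset.mem_powersetCard]
      constructor
      · intro j hj
        simp only [Finset.mem_filter, Finset.mem_univ, true_and] at hj
        simp only [hI, Finset.mem_filter, Finset.mem_univ, true_and]
        constructor
        · intro hj0; rw [h0 j hj0] at hj; exact absurd hj (by simp)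
        · intro hj1; rw [h1 j hj1] at hj; exact absurd hj (by simp)
      · exact hc
    · intro S hS
      rw [Finset.mem_powersetCard] at hS
      obtain ⟨hsub, hcard⟩ := hS
      simp only [admissible, Finset.mem_filter, Finset.mem_univ, true_and]
      refine ⟨?_, ?_, ?_⟩
      · intro j hj
        simp only [decide_eq_true_eq]
        intro hmem
        have := hsub hmem
        simp only [hI, Finset.mem_filter] at this
        exact this.2.1 hj
      · intro j hj
        simp only [decide_eq_true_eq]
        intro hmem
        have := hsub hmem
        simp only [hI, Finset.mem_filter] at this
        exact this.2.2 hj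
      · have : Finset.univ.filter (fun j => decide (j ∉ S) = false) = S := by
          ext j; simp
        rw [this, hcard]
    · intro p hp
      funext j
      simp only [Finset.mem_filter, Finset.mem_univ, true_and, decide_eq_true_eq]
      cases hpj : p j <;> simp [hpj]
    · intro S hS
      ext j
      simp
  rw [hbij, Finset.card_powersetCard, hIcard]

theorem stmt1 (n s : ℕ) (h : n + 2 ≤ 2 * s) :
    L n s = n.choose s := by
  classical
  have hfilt : (admissible n s).filter (fun p => crossesLeft p) = admissible n s := by
    refine Finset.filter_eq_self.mpr (fun p hp => ?_)
    simp only [admissible, Finset.mem_filter, Finset.mem_univ, true_and] at hp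
    obtain ⟨h0, h1, hc⟩ := hp
    have htrue : (Finset.univ.filter (fun j => p j = true)).card = n + 2 - s := by
      have := Finset.card_filter_add_card_filter_not
        (s := (Finset.univ : Finset (Fin (n+2)))) (p := fun j => p j = true)
      have heq : (Finset.univ.filter (fun j : Fin (n+2) => ¬ p j = true))
          = Finset.univ.filter (fun j => p j = false) := by
        ext j; simp
      rw [heq, hc] at this
      simp only [Finset.card_univ, Fintype.card_fin] at this
      omega
    have hsle : s ≤ n + 2 := by
      have := Finset.card_filter_add_card_filter_not
        (s := (Finset.univ : Finset (Fin (n+2)))) (p := fun j => p j = true)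
      have heq : (Finset.univ.filter (fun j : Fin (n+2) => ¬ p j = true))
          = Finset.univ.filter (fun j => p j = false) := by
        ext j; simp
      rw [heq, hc] at this
      simp only [Finset.card_univ, Fintype.card_fin] at this
      omega
    have htot : pathPos p (n + 2) = (n:ℤ) + 2 - 2 * s := by
      rw [pathPos_total, htrue]
      have : s ≤ n + 2 := hsle
      push_cast [this]
      ring
    have hstep : pathPos p (n + 2) = pathPos p (n + 1) + 1 := by
      have hlt : n + 1 < n + 2 := by omega
      rw [pathPos_succ p (n+1) hlt, h1 ⟨n+1, hlt⟩ rfl]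
      simp
    have hle : pathPos p (n + 1) ≤ -1 := by
      rw [hstep] at htot
      have : (n:ℤ) + 2 ≤ 2 * s := by exact_mod_cast h
      omega
    obtain ⟨t, ht, he⟩ := hits_neg_one p (n+1) hle
    exact ⟨t, Finset.mem_range.mpr (by omega), he⟩
  rw [L, hfilt, admissible_card]
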